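/- Let L > 0 and T > 0, and let ψ be a classical solution on [0,L]×[0,T] of the backward adjoint linear KdV system ψ_t + ψ_x + ψ_{xxx} = 0 with boundary conditions ψ(0,t) = 0, ψ_x(0,t) = 0 and ψ(L,t) + ψ_{xx}(L,t) = 0 for all t ∈ [0,T]. Then ∫₀^L ψ(x,T)² dx ≤ (1/T) ∫₀^T ∫₀^L ψ(x,t)² dx dt + ∫₀^T ψ_x(L,t)² dt + ∫₀^T ψ(L,t)² dt. -/

import Mathlib

open MeasureTheory Set

private lemma interval_swap {f : ℝ → ℝ → ℝ} {a b c d : ℝ} (hab : a ≤ b) (hcd : c ≤ d)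
    (hf : IntegrableOn (Function.uncurry f) (Icc a b ×ˢ Icc c d)) :
    (∫ x in a..b, ∫ s in c..d, f x s) = ∫ s in c..d, ∫ x in a..b, f x s := by
  rw [intervalIntegral.integral_of_le hab, intervalIntegral.integral_of_le hcd]
  simp_rw [intervalIntegral.integral_of_le hcd, intervalIntegral.integral_of_le hab]
  have h : Integrable (Function.uncurry f)
      ((volume.restrict (Ioc a b)).prod (volume.restrict (Ioc c d))) := by
    rw [Measure.prod_restrict]
    exact hf.mono_set (prod_mono Ioc_subset_Icc_self Ioc_subset_Icc_self)
  exact integral_integral_swap h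

theorem backward_adjoint_kdv_terminal_estimate
    (L T : ℝ) (hL : 0 < L) (hT : 0 < T)
    (ψ ψt ψx ψxx ψxxx : ℝ → ℝ → ℝ)
    (hψt : ∀ x ∈ Icc (0:ℝ) L, ∀ t ∈ Icc (0:ℝ) T,
      HasDerivAt (fun s => ψ x s) (ψt x t) t)
    (hψx : ∀ x ∈ Icc (0:ℝ) L, ∀ t ∈ Icc (0:ℝ) T,
      HasDerivAt (fun y => ψ y t) (ψx x t) x)
    (hψxx : ∀ x ∈ Icc (0:ℝ) L, ∀ t ∈ Icc (0:ℝ) T,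
      HasDerivAt (fun y => ψx y t) (ψxx x t) x)
    (hψxxx : ∀ x ∈ Icc (0:ℝ) L, ∀ t ∈ Icc (0:ℝ) T,
      HasDerivAt (fun y => ψxx y t) (ψxxx x t) x)
    (hcont : ContinuousOn (fun p : ℝ × ℝ => ψ p.1 p.2) (Icc 0 L ×ˢ Icc 0 T))
    (hcontt : ContinuousOn (fun p : ℝ × ℝ => ψt p.1 p.2) (Icc 0 L ×ˢ Icc 0 T))
    (hcontx : ContinuousOn (fun p : ℝ × ℝ => ψx p.1 p.2) (Icc 0 L ×ˢ Icc 0 T))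
    (hcontxx : ContinuousOn (fun p : ℝ × ℝ => ψxx p.1 p.2) (Icc 0 L ×ˢ Icc 0 T))
    (hcontxxx : ContinuousOn (fun p : ℝ × ℝ => ψxxx p.1 p.2) (Icc 0 L ×ˢ Icc 0 T))
    (hpde : ∀ x ∈ Icc (0:ℝ) L, ∀ t ∈ Icc (0:ℝ) T,
      ψt x t + ψx x t + ψxxx x t = 0)
    (hbc1 : ∀ t ∈ Icc (0:ℝ) T, ψ 0 t = 0)
    (hbc2 : ∀ t ∈ Icc (0:ℝ) T, ψx 0 t = 0)
    (hbc3 : ∀ t ∈ Icc (0:ℝ) T, ψ L t + ψxx L t = 0) :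
    (∫ x in (0:ℝ)..L, (ψ x T) ^ 2)
      ≤ (1 / T) * (∫ t in (0:ℝ)..T, ∫ x in (0:ℝ)..L, (ψ x t) ^ 2)
        + (∫ t in (0:ℝ)..T, (ψx L t) ^ 2)
        + (∫ t in (0:ℝ)..T, (ψ L t) ^ 2) := by
  have hLmem : L ∈ Icc (0:ℝ) L := ⟨hL.le, le_rfl⟩
  have h0L : (0:ℝ) ∈ Icc (0:ℝ) L := ⟨le_rfl, hL.le⟩
  have hTmem : T ∈ Icc (0:ℝ) T := ⟨hT.le, le_rfl⟩
  -- slice continuity helpers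
  have sliceX : ∀ (f : ℝ → ℝ → ℝ),
      ContinuousOn (fun p : ℝ × ℝ => f p.1 p.2) (Icc 0 L ×ˢ Icc 0 T) →
      ∀ s ∈ Icc (0:ℝ) T, ContinuousOn (fun x => f x s) (Icc (0:ℝ) L) := by
    intro f hf s hs
    exact hf.comp ((continuous_id.prodMk continuous_const).continuousOn)
      (fun x hx => mk_mem_prod hx hs)
  have sliceT : ∀ (f : ℝ → ℝ → ℝ),
      ContinuousOn (fun p : ℝ × ℝ => f p.1 p.2) (Icc 0 L ×ˢ Icc 0 T) →
      ∀ x ∈ Icc (0:ℝ) L, ContinuousOn (fun t => f x t) (Icc (0:ℝ) T) := by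
    intro f hf x hx
    exact hf.comp ((continuous_const.prodMk continuous_id).continuousOn)
      (fun t ht => mk_mem_prod hx ht)
  set g : ℝ → ℝ := fun s => ψ L s ^ 2 + ψx L s ^ 2 with hg
  have hgcont : ContinuousOn g (Icc (0:ℝ) T) :=
    ((sliceT ψ hcont L hLmem).pow 2).add ((sliceT ψx hcontx L hLmem).pow 2)
  have hgnn : ∀ s, 0 ≤ g s := fun s => by positivity
  -- Step A : x-integration by parts
  have stepA : ∀ s ∈ Icc (0:ℝ) T,
      (∫ x in (0:ℝ)..L, 2 * ψ x s * ψt x s) = g s := by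
    intro s hs
    have hderiv : ∀ x ∈ uIcc (0:ℝ) L,
        HasDerivAt (fun y => -(ψ y s ^ 2 + 2 * ψ y s * ψxx y s - ψx y s ^ 2))
          (2 * ψ x s * ψt x s) x := by
      intro x hx
      rw [uIcc_of_le hL.le] at hx
      have h1 := hψx x hx s hs
      have h2 := hψxx x hx s hs
      have h3 := hψxxx x hx s hs
      have hp := hpde x hx s hs
      have hd : HasDerivAt (fun y => -(ψ y s ^ 2 + 2 * ψ y s * ψxx y s - ψx y s ^ 2))
          (-((2 * ψ x s ^ 1 * ψx x s)
             + (2 * ψx x s * ψxx x s + 2 * ψ x s * ψxxx x s)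
             - 2 * ψx x s ^ 1 * ψxx x s)) x :=
        (((h1.pow 2).add ((h1.const_mul 2).mul h3)).sub (h2.pow 2)).neg
      convert hd using 1
      linear_combination (2 * ψ x s) * hp
    have hint : IntervalIntegrable (fun x => 2 * ψ x s * ψt x s) volume 0 L := by
      apply ContinuousOn.intervalIntegrable
      rw [uIcc_of_le hL.le]
      exact (continuousOn_const.mul (sliceX ψ hcont s hs)).mul (sliceX ψt hcontt s hs)
    rw [intervalIntegral.integral_eq_sub_of_hasDerivAt hderiv hint]
    have e0 := hbc1 s hs
    have e1 := hbc2 s hs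
    have e2 := hbc3 s hs
    rw [hg]
    rw [e0, e1]
    linear_combination (-2 * ψ L s) * e2
  -- Step B : t-FTC per x
  have stepB : ∀ x ∈ Icc (0:ℝ) L, ∀ t ∈ Icc (0:ℝ) T,
      ψ x T ^ 2 - ψ x t ^ 2 = ∫ s in t..T, 2 * ψ x s * ψt x s := by
    intro x hx t ht
    have hsub : uIcc t T ⊆ Icc (0:ℝ) T := by
      rw [uIcc_of_le ht.2]; exact Icc_subset_Icc ht.1 le_rfl
    have hderiv : ∀ s ∈ uIcc t T, HasDerivAt (fun u => ψ x u ^ 2) (2 * ψ x s * ψt x s) s := by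
      intro s hs
      have := (hψt x hx s (hsub hs)).fun_pow 2
      exact this.congr_deriv (by ring)
    have hint : IntervalIntegrable (fun s => 2 * ψ x s * ψt x s) volume t T := by
      apply ContinuousOn.intervalIntegrable
      exact ((continuousOn_const.mul (sliceT ψ hcont x hx)).mul
        (sliceT ψt hcontt x hx)).mono hsub
    rw [intervalIntegral.integral_eq_sub_of_hasDerivAt hderiv hint]
  -- product continuity of 2 ψ ψt
  have hprodcont : ContinuousOn (fun p : ℝ × ℝ => 2 * ψ p.1 p.2 * ψt p.1 p.2)
      (Icc 0 L ×ˢ Icc 0 T) := (continuousOn_const.mul hcont).mul hcontt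
  -- Step C : energy identity
  have stepC : ∀ t ∈ Icc (0:ℝ) T,
      (∫ x in (0:ℝ)..L, ψ x T ^ 2)
        = (∫ x in (0:ℝ)..L, ψ x t ^ 2) + ∫ s in t..T, g s := by
    intro t ht
    have hIT : IntervalIntegrable (fun x => ψ x T ^ 2) volume 0 L := by
      apply ContinuousOn.intervalIntegrable
      rw [uIcc_of_le hL.le]; exact (sliceX ψ hcont T hTmem).pow 2
    have hIt : IntervalIntegrable (fun x => ψ x t ^ 2) volume 0 L := by
      apply ContinuousOn.intervalIntegrable
      rw [uIcc_of_le hL.le]; exact (sliceX ψ hcont t ht).pow 2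
    have key : (∫ x in (0:ℝ)..L, ψ x T ^ 2) - (∫ x in (0:ℝ)..L, ψ x t ^ 2)
        = ∫ s in t..T, g s := by
      rw [← intervalIntegral.integral_sub hIT hIt]
      have e1 : (∫ x in (0:ℝ)..L, (ψ x T ^ 2 - ψ x t ^ 2))
          = ∫ x in (0:ℝ)..L, ∫ s in t..T, 2 * ψ x s * ψt x s := by
        apply intervalIntegral.integral_congr
        intro x hx
        rw [uIcc_of_le hL.le] at hx
        exact stepB x hx t ht
      rw [e1]
      have hfub : (∫ x in (0:ℝ)..L, ∫ s in t..T, 2 * ψ x s * ψt x s)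
          = ∫ s in t..T, ∫ x in (0:ℝ)..L, 2 * ψ x s * ψt x s := by
        apply interval_swap hL.le ht.2
        have hcomp : IsCompact (Icc (0:ℝ) L ×ˢ Icc t T) :=
          isCompact_Icc.prod isCompact_Icc
        have hsub2 : (Icc (0:ℝ) L ×ˢ Icc t T) ⊆ Icc (0:ℝ) L ×ˢ Icc (0:ℝ) T :=
          prod_mono (Subset.refl _) (Icc_subset_Icc ht.1 le_rfl)
        exact (hprodcont.mono hsub2).integrableOn_compact hcomp
      rw [hfub]
      apply intervalIntegral.integral_congr
      intro s hs
      have hs' : s ∈ Icc (0:ℝ) T := by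
        rw [uIcc_of_le ht.2] at hs
        exact ⟨ht.1.trans hs.1, hs.2⟩
      exact stepA s hs'
    linarith [key]
  set C : ℝ := ∫ s in (0:ℝ)..T, g s with hC
  have hgI : ∀ a b : ℝ, a ∈ Icc (0:ℝ) T → b ∈ Icc (0:ℝ) T →
      IntervalIntegrable g volume a b := by
    intro a b ha hb
    apply ContinuousOn.intervalIntegrable
    apply hgcont.mono
    rw [← uIcc_of_le hT.le] at ha hb ⊢
    exact uIcc_subset_uIcc ha hb
  have h0T : (0:ℝ) ∈ Icc (0:ℝ) T := ⟨le_rfl, hT.le⟩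
  -- split : ∫_t^T g = C - ∫_0^t g
  have hsplit : ∀ t ∈ Icc (0:ℝ) T,
      (∫ s in t..T, g s) = C - ∫ s in (0:ℝ)..t, g s := by
    intro t ht
    have := intervalIntegral.integral_add_adjacent_intervals
      (hgI 0 t h0T ht) (hgI t T ht hTmem)
    rw [hC]; linarith [this]
  -- key pointwise bound
  have key : ∀ t ∈ Icc (0:ℝ) T,
      (∫ x in (0:ℝ)..L, ψ x T ^ 2) ≤ (∫ x in (0:ℝ)..L, ψ x t ^ 2) + C := by
    intro t ht
    have h1 := stepC t ht
    have h2 := hsplit t ht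
    have h3 : 0 ≤ ∫ s in (0:ℝ)..t, g s :=
      intervalIntegral.integral_nonneg ht.1 (fun s _ => hgnn s)
    linarith
  -- continuity of t ↦ ∫_0^L ψ(x,t)^2 dx on [0,T]
  have hHcont : ContinuousOn (fun t => ∫ x in (0:ℝ)..L, ψ x t ^ 2) (Icc (0:ℝ) T) := by
    have hgInt : IntegrableOn g (uIcc (0:ℝ) T) := by
      rw [uIcc_of_le hT.le]; exact hgcont.integrableOn_compact isCompact_Icc
    have hprim : ContinuousOn (fun t => ∫ s in (0:ℝ)..t, g s) (Icc (0:ℝ) T) := by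
      have := intervalIntegral.continuousOn_primitive_interval hgInt
      rwa [uIcc_of_le hT.le] at this
    have heq : EqOn (fun t => ∫ x in (0:ℝ)..L, ψ x t ^ 2)
        (fun t => (∫ x in (0:ℝ)..L, ψ x T ^ 2) - C + ∫ s in (0:ℝ)..t, g s)
        (Icc (0:ℝ) T) := by
      intro t ht
      have h1 := stepC t ht
      have h2 := hsplit t ht
      simp only
      linarith
    exact ContinuousOn.congr ((continuousOn_const).add hprim) heq
  have hHI : IntervalIntegrable (fun t => ∫ x in (0:ℝ)..L, ψ x t ^ 2) volume 0 T := by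
    apply ContinuousOn.intervalIntegrable
    rwa [uIcc_of_le hT.le]
  -- integrate the pointwise bound over [0,T]
  have hmono := intervalIntegral.integral_mono_on hT.le
    (intervalIntegrable_const (c := ∫ x in (0:ℝ)..L, ψ x T ^ 2))
    (hHI.add (intervalIntegrable_const (c := C))) key
  rw [intervalIntegral.integral_const,
      intervalIntegral.integral_add hHI (intervalIntegrable_const (c := C)),
      intervalIntegral.integral_const] at hmono
  simp only [sub_zero, smul_eq_mul] at hmono
  -- split C
  have hCsplit : C = (∫ s in (0:ℝ)..T, ψ L s ^ 2) + ∫ s in (0:ℝ)..T, ψx L s ^ 2 := by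
    rw [hC]
    apply intervalIntegral.integral_add
    · apply ContinuousOn.intervalIntegrable
      rw [uIcc_of_le hT.le]; exact (sliceT ψ hcont L hLmem).pow 2
    · apply ContinuousOn.intervalIntegrable
      rw [uIcc_of_le hT.le]; exact (sliceT ψx hcontx L hLmem).pow 2
  have hfinal : (∫ x in (0:ℝ)..L, ψ x T ^ 2)
      ≤ (1 / T) * (∫ t in (0:ℝ)..T, ∫ x in (0:ℝ)..L, ψ x t ^ 2) + C := by
    have h2 : (∫ x in (0:ℝ)..L, ψ x T ^ 2)
        ≤ ((∫ t in (0:ℝ)..T, ∫ x in (0:ℝ)..L, ψ x t ^ 2) + T * C) / T := by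
      rw [le_div_iff₀ hT, mul_comm]
      linarith [hmono]
    have h3 : ((∫ t in (0:ℝ)..T, ∫ x in (0:ℝ)..L, ψ x t ^ 2) + T * C) / T
        = (1 / T) * (∫ t in (0:ℝ)..T, ∫ x in (0:ℝ)..L, ψ x t ^ 2) + C := by
      field_simp
    linarith
  linarith [hfinal, hCsplit.le]
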